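/- arXiv:2011.01208 — 2 statements merged into one kernel-verified Lean document; each statement's English description precedes it below -/
import Mathlib

section
/- Let ℓ, m ≥ 0 and let g : Fin ℓ → Option (Fin m) be any function (encoding a morphism of pointed finite sets ⟨ℓ⟩ → ⟨m⟩). Let A = {a : Fin ℓ | g a ≠ none} and let k be the cardinality of A. Then there exists exactly one pair (f, σ), where f : Fin ℓ → Option (Fin k) and σ : Fin k → Fin m, such that: (i) g a = Option.map σ (f a) for every a : Fin ℓ; (ii) for every j : Fin k there is exactly one a : Fin ℓ with f a = some j; and (iii) f is order-preserving on its support, i.e., whenever a ≤ b in Fin ℓ and f a = some i and f b = some j, then i ≤ j in Fin k. -/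
/-!
Statement 1: unique inert–active factorization of morphisms of pointed finite sets,
with the inert part having full support and being order-preserving on its support.
A morphism of pointed finite sets `⟨ℓ⟩ → ⟨m⟩` is encoded by a function
`g : Fin ℓ → Option (Fin m)` (the basepoint being `none`).
-/

theorem unique_inert_active_factorization (ℓ m k : ℕ) (g : Fin ℓ → Option (Fin m))
    (hk : k = (Finset.univ.filter fun a : Fin ℓ => g a ≠ none).card) :
    ∃! fσ : (Fin ℓ → Option (Fin k)) × (Fin k → Fin m),
      (∀ a : Fin ℓ, g a = Option.map fσ.2 (fσ.1 a)) ∧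
      (∀ j : Fin k, ∃! a : Fin ℓ, fσ.1 a = some j) ∧
      (∀ a b : Fin ℓ, a ≤ b → ∀ i j : Fin k,
        fσ.1 a = some i → fσ.1 b = some j → i ≤ j) := by
  set s : Finset (Fin ℓ) := Finset.univ.filter fun a => g a ≠ none with hs
  have hmem : ∀ a : Fin ℓ, a ∈ s ↔ g a ≠ none := by intro a; simp [hs]
  let e : Fin k ≃o s := s.orderIsoOfFin hk.symm
  have hge : ∀ j : Fin k, g (e j).1 ≠ none := fun j => (hmem _).1 (e j).2
  let f : Fin ℓ → Option (Fin k) := fun a =>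
    if h : g a ≠ none then some (e.symm ⟨a, (hmem a).2 h⟩) else none
  let σ : Fin k → Fin m := fun j => (g (e j).1).get (Option.isSome_iff_ne_none.2 (hge j))
  have hfsome : ∀ (a : Fin ℓ) (h : g a ≠ none), f a = some (e.symm ⟨a, (hmem a).2 h⟩) := by
    intro a h; simp [f, h]
  have hσ : ∀ j : Fin k, g (e j).1 = some (σ j) := by
    intro j; exact (Option.some_get _).symm
  refine ⟨⟨f, σ⟩, ⟨?_, ?_, ?_⟩, ?_⟩
  · intro a
    dsimp only
    by_cases h : g a = none
    · simp [f, h]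
    · rw [hfsome a h]
      have : σ (e.symm ⟨a, (hmem a).2 h⟩) = (g a).get (Option.isSome_iff_ne_none.2 h) := by
        simp only [σ]
        congr 1 <;> rw [e.apply_symm_apply]
      simp [this]
  · intro j
    refine ⟨(e j).1, ?_, ?_⟩
    · dsimp only
      rw [hfsome _ (hge j)]
      congr 1
      rw [show (⟨(e j).1, (hmem _).2 (hge j)⟩ : {x // x ∈ s}) = e j from rfl,
        e.symm_apply_apply]
    · intro a ha
      dsimp only at ha
      by_cases h : g a = none
      · simp [f, h] at ha
      · rw [hfsome a h] at ha
        have := Option.some_injective _ ha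
        have : (⟨a, (hmem a).2 h⟩ : {x // x ∈ s}) = e j := by
          rw [← this, e.apply_symm_apply]
        exact congrArg Subtype.val this
  · intro a b hab i j hi hj
    dsimp only at hi hj
    by_cases ha : g a = none
    · simp [f, ha] at hi
    by_cases hb : g b = none
    · simp [f, hb] at hj
    rw [hfsome a ha] at hi; rw [hfsome b hb] at hj
    rw [← Option.some_injective _ hi, ← Option.some_injective _ hj]
    exact e.symm.monotone hab
  · rintro ⟨f', σ'⟩ ⟨h1, h2, h3⟩
    dsimp only at h1 h2 h3
    have hsupp : ∀ a : Fin ℓ, f' a = none ↔ g a = none := by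
      intro a
      have := h1 a
      cases hfa : f' a <;> simp_all
    have hψs : ∀ x : {x // x ∈ s}, (f' x.1).isSome :=
      fun x => Option.isSome_iff_ne_none.2 (fun h => ((hmem _).1 x.2) ((hsupp _).1 h))
    let ψ : {x // x ∈ s} → Fin k := fun x => (f' x.1).get (hψs x)
    have hψ : ∀ x : {x // x ∈ s}, f' x.1 = some (ψ x) := fun x => (Option.some_get _).symm
    have hmono : StrictMono ψ := by
      intro x y hxy
      have hle : ψ x ≤ ψ y := h3 x.1 y.1 (le_of_lt hxy) _ _ (hψ x) (hψ y)
      rcases lt_or_eq_of_le hle with h | h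
      · exact h
      · exfalso
        have := (h2 (ψ y)).unique (h ▸ hψ x) (hψ y)
        exact ne_of_lt hxy (Subtype.ext this)
    have hsurj : Function.Surjective ψ := by
      intro j
      obtain ⟨a, ha, -⟩ := h2 j
      have hga : g a ≠ none := fun h => by
        have := (hsupp a).2 h
        rw [this] at ha; exact Option.some_ne_none _ ha.symm
      refine ⟨⟨a, (hmem a).2 hga⟩, ?_⟩
      have := hψ ⟨a, (hmem a).2 hga⟩
      rw [ha] at this
      exact (Option.some_injective _ this).symm
    have hE : (StrictMono.orderIsoOfSurjective ψ hmono hsurj) = e.symm :=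
      Subsingleton.elim _ _
    have hψe : ∀ x : {x // x ∈ s}, ψ x = e.symm x := by
      intro x
      rw [← hE]; rfl
    have hf : f' = f := by
      funext a
      by_cases h : g a = none
      · rw [(hsupp a).2 h]; simp [f, h]
      · rw [hfsome a h, hψ ⟨a, (hmem a).2 h⟩, hψe]
    have hσ' : σ' = σ := by
      funext j
      have h1j := h1 (e j).1
      have : f' (e j).1 = some j := by
        rw [hψ (e j), hψe, e.symm_apply_apply]
      rw [this, hσ j] at h1j
      exact (Option.some_injective _ h1j).symm
    exact Prod.ext hf hσ'
end

section
/- Fix integers 1 < k < ℓ. In the category of functors from Γᵒᵖ (pointed finite sets) to sets, let j⟨ℓ⟩ be the corepresentable functor ⟨m⟩ ↦ Hom(⟨ℓ⟩, ⟨m⟩), let ∂⟨k⟩ ⊆ j⟨k⟩ be the subfunctor whose value at ⟨m⟩ consists of the pointed maps ⟨k⟩ → ⟨m⟩ sending at least one nonbasepoint element to the basepoint, and for 0 ≤ p ≤ ℓ let W_p ⊆ j⟨ℓ⟩ be the subfunctor whose value at ⟨m⟩ consists of the pointed maps g : ⟨ℓ⟩ → ⟨m⟩ whose support has at most p elements.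 Let S be the set of pointed maps f : ⟨ℓ⟩ → ⟨k⟩ that are inert with full support and order-preserving on their support. Then the commutative square whose left map is the coproduct over f ∈ S of the inclusions ∂⟨k⟩ ↪ j⟨k⟩, whose right map is the inclusion W_{k−1} ↪ W_k, whose bottom map sends, on the summand indexed by f ∈ S, a pointed map σ : ⟨k⟩ → ⟨m⟩ to the composite σ ∘ f ∈ W_k(⟨m⟩), and whose top map is the restriction of the bottom map (which lands in W_{k−1}), is a pushout square in the category of functors from Γᵒᵖ to sets. -/
/-!
Statement 2 (Proposition 6.4.1 / Section 5.6 of the paper): for `1 < k < ℓ`, the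
commutative square in the category of functors `Γᵒᵖ ⥤ Type` whose left map is the
coproduct, over the set `S` of inert order-preserving surjections `f : ⟨ℓ⟩ → ⟨k⟩`,
of the boundary inclusions `∂⟨k⟩ ↪ j⟨k⟩`, whose right map is the inclusion
`W_{k-1} ↪ W_k` of the subfunctors of `j⟨ℓ⟩` given by the support-cardinality
filtration, and whose bottom (resp. top) map is given by `σ ↦ σ ∘ f` on the summand
indexed by `f ∈ S`, is a pushout square.
-/

open CategoryTheory

namespace Stmt2

/-- The category `Γᵒᵖ`: objects are the pointed finite sets `⟨n⟩ = Option (Fin n)`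
(with basepoint `none`) and morphisms are basepoint-preserving functions, encoded
as functions `Fin n → Option (Fin m)`. -/
structure GammaOp where
  /-- the number of nonbasepoint elements -/
  n : ℕ

instance : Category GammaOp where
  Hom a b := Fin a.n → Option (Fin b.n)
  id _ := fun x => some x
  comp f g := fun x => (f x).bind g
  id_comp f := by funext x; rfl
  comp_id f := by
    funext x
    show (f x).bind some = f x
    cases f x <;> rfl
  assoc f g h := by
    funext x
    show ((f x).bind g).bind h = (f x).bind (fun y => (g y).bind h)
    cases f x <;> rfl

/-- The cardinality of the support of a morphism of pointed finite sets. -/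
def suppCard {l m : ℕ} (g : Fin l → Option (Fin m)) : ℕ :=
  (Finset.univ.filter fun x => g x ≠ none).card

/-- `f` is inert with full support (every nonbasepoint element of the target has
exactly one preimage) and order-preserving on its support. -/
def IsInertOrdered {l k : ℕ} (f : Fin l → Option (Fin k)) : Prop :=
  (∀ j : Fin k, ∃! x : Fin l, f x = some j) ∧
  ∀ x y : Fin l, x ≤ y → ∀ i j : Fin k, f x = some i → f y = some j → i ≤ j

/-- The indexing set `S` of the coproduct. -/
def SIdx (l k : ℕ) : Type := {f : Fin l → Option (Fin k) // IsInertOrdered f}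

lemma suppCard_comp_le {a b c : GammaOp} (g : a ⟶ b) (φ : b ⟶ c) :
    suppCard (g ≫ φ) ≤ suppCard g := by
  apply Finset.card_le_card
  intro x hx
  simp only [Finset.mem_filter, Finset.mem_univ, true_and] at hx ⊢
  intro hgx
  apply hx
  show (g x).bind φ = none
  rw [hgx]; rfl

/-- If `f` is inert with full support, then the support of any composite `f ≫ σ`
injects (via `f`) into the set of `j` with `σ j ≠ none`; this gives a cardinality
bound. -/
lemma suppCard_comp_le_of_inert {l k m : ℕ} (hk : 0 < k)
    (f : Fin l → Option (Fin k)) (hf : ∀ j : Fin k, ∃! x : Fin l, f x = some j)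
    (σ : Fin k → Option (Fin m)) (t : Finset (Fin k))
    (ht : ∀ j : Fin k, σ j ≠ none → j ∈ t) :
    suppCard (fun x => (f x).bind σ) ≤ t.card := by
  classical
  apply Finset.card_le_card_of_injOn (fun x => (f x).getD ⟨0, hk⟩)
  · intro x hx
    simp only [suppCard, Finset.mem_coe, Finset.mem_filter, Finset.mem_univ, true_and] at hx
    match hfx : f x with
    | none => rw [hfx] at hx; exact absurd rfl hx
    | some j =>
      rw [hfx] at hx
      simp only [hfx, Option.getD_some]
      exact ht j hx
  · intro x hx y hy hxy
    simp only [Finset.coe_filter, Set.mem_setOf_eq] at hx hy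
    match hfx : f x with
    | none => rw [hfx] at hx; exact absurd rfl hx.2
    | some i =>
      match hfy : f y with
      | none => rw [hfy] at hy; exact absurd rfl hy.2
      | some j =>
        simp only [hfx, hfy, Option.getD_some] at hxy
        subst hxy
        exact ((hf i).unique hfx hfy)

/-- The corepresentable functor `j⟨l⟩ = Γᵒᵖ(⟨l⟩, -)`. -/
def J (l : ℕ) : GammaOp ⥤ Type :=
  coyoneda.obj (Opposite.op ⟨l⟩)

/-- The subfunctor `W_p ⊆ j⟨l⟩` of morphisms whose support has at most `p` elements. -/
def W (l p : ℕ) : GammaOp ⥤ Type where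
  obj m := {g : (⟨l⟩ : GammaOp) ⟶ m // suppCard g ≤ p}
  map φ := TypeCat.ofHom fun g => ⟨g.1 ≫ φ, le_trans (suppCard_comp_le g.1 φ) g.2⟩
  map_id m := by refine ConcreteCategory.hom_ext _ _ fun g => ?_; exact Subtype.ext (Category.comp_id g.1)
  map_comp φ ψ := by refine ConcreteCategory.hom_ext _ _ fun g => ?_; exact Subtype.ext (Category.assoc g.1 φ ψ).symm

/-- The boundary `∂⟨k⟩ ⊆ j⟨k⟩`: pointed maps sending at least one nonbasepoint
element to the basepoint. -/
def Bd (k : ℕ) : GammaOp ⥤ Type where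
  obj m := {σ : (⟨k⟩ : GammaOp) ⟶ m // ∃ x, σ x = none}
  map φ := TypeCat.ofHom fun σ => ⟨σ.1 ≫ φ, by
    obtain ⟨x, hx⟩ := σ.2
    exact ⟨x, by show (σ.1 x).bind φ = none; rw [hx]; rfl⟩⟩
  map_id m := by refine ConcreteCategory.hom_ext _ _ fun σ => ?_; exact Subtype.ext (Category.comp_id σ.1)
  map_comp φ ψ := by refine ConcreteCategory.hom_ext _ _ fun σ => ?_; exact Subtype.ext (Category.assoc σ.1 φ ψ).symm

/-- The coproduct `∐_{f ∈ S} ∂⟨k⟩`. -/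
def SBd (l k : ℕ) : GammaOp ⥤ Type where
  obj m := SIdx l k × (Bd k).obj m
  map φ := TypeCat.ofHom fun p => (p.1, (Bd k).map φ p.2)
  map_id m := by ext p <;> simp
  map_comp φ ψ := by ext p <;> simp

/-- The coproduct `∐_{f ∈ S} j⟨k⟩`. -/
def SJ (l k : ℕ) : GammaOp ⥤ Type where
  obj m := SIdx l k × ((⟨k⟩ : GammaOp) ⟶ m)
  map φ := TypeCat.ofHom fun p => (p.1, p.2 ≫ φ)
  map_id m := by ext p <;> simp
  map_comp φ ψ := by ext p <;> simp

/-- The left map of the square: the coproduct of the boundary inclusions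
`∂⟨k⟩ ↪ j⟨k⟩`. -/
def leftMap (l k : ℕ) : SBd l k ⟶ SJ l k where
  app _ := TypeCat.ofHom fun p => (p.1, p.2.1)
  naturality _ _ _ := rfl

/-- The right map of the square: the inclusion `W_{k-1} ↪ W_k`. -/
def rightMap (l k : ℕ) : W l (k - 1) ⟶ W l k where
  app _ := TypeCat.ofHom fun g => ⟨g.1, le_trans g.2 (Nat.sub_le k 1)⟩
  naturality _ _ _ := rfl

/-- The bottom map of the square: on the summand indexed by `f ∈ S`, it sends
`σ : ⟨k⟩ → ⟨m⟩` to the composite `σ ∘ f : ⟨l⟩ → ⟨m⟩`, which has support of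
cardinality at most `k`. -/
def bottomMap (l k : ℕ) (hk : 0 < k) : SJ l k ⟶ W l k where
  app m := TypeCat.ofHom fun p => ⟨fun x => (p.1.1 x).bind p.2,
    le_of_le_of_eq
      (suppCard_comp_le_of_inert hk p.1.1 p.1.2.1 p.2 Finset.univ fun _ _ => Finset.mem_univ _)
      (by simp)⟩
  naturality m m' φ := by
    refine ConcreteCategory.hom_ext _ _ fun p => ?_
    apply Subtype.ext
    funext x
    show (p.1.1 x).bind (fun y => (p.2 y).bind φ) = ((p.1.1 x).bind p.2).bind φ
    cases p.1.1 x <;> rfl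

/-- The top map of the square: the restriction of the bottom map, which lands in
`W_{k-1}` because `σ` kills at least one nonbasepoint element. -/
def topMap (l k : ℕ) (hk : 0 < k) : SBd l k ⟶ W l (k - 1) where
  app m := TypeCat.ofHom fun p => ⟨fun x => (p.1.1 x).bind p.2.1, by
    classical
    obtain ⟨a₀, ha₀⟩ := p.2.2
    refine le_of_le_of_eq
      (suppCard_comp_le_of_inert hk p.1.1 p.1.2.1 p.2.1 (Finset.univ.erase a₀)
        fun j hj => Finset.mem_erase.2 ⟨fun h => hj (h ▸ ha₀), Finset.mem_univ j⟩) ?_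
    rw [Finset.card_erase_of_mem (Finset.mem_univ a₀)]
    simp⟩
  naturality m m' φ := by
    refine ConcreteCategory.hom_ext _ _ fun p => ?_
    apply Subtype.ext
    funext x
    show (p.1.1 x).bind (fun y => (p.2.1 y).bind φ) = ((p.1.1 x).bind p.2.1).bind φ
    cases p.1.1 x <;> rfl

/-! ### Auxiliary material for the proof -/

section Aux

open Finset

/-- The support of a pointed map, as a finset. -/
def supp {l m : ℕ} (g : Fin l → Option (Fin m)) : Finset (Fin l) :=
  Finset.univ.filter fun x => g x ≠ none

lemma suppCard_eq_card_supp {l m : ℕ} (g : Fin l → Option (Fin m)) :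
    suppCard g = (supp g).card := rfl

lemma mem_supp_iff {l m : ℕ} (g : Fin l → Option (Fin m)) (x : Fin l) :
    x ∈ supp g ↔ g x ≠ none := by simp [supp]

/-- The canonical inert order-preserving map associated to `g` with support of
cardinality `k`. -/
noncomputable def canonF {l m : ℕ} (g : Fin l → Option (Fin m)) {k : ℕ}
    (h : (supp g).card = k) : Fin l → Option (Fin k) :=
  fun x => if hx : x ∈ supp g then some (((supp g).orderIsoOfFin h).symm ⟨x, hx⟩) else none

/-- The canonical full-support factor associated to `g`. -/
noncomputable def canonSig {l m : ℕ} (g : Fin l → Option (Fin m)) {k : ℕ}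
    (h : (supp g).card = k) : Fin k → Option (Fin m) :=
  fun j => g ((supp g).orderEmbOfFin h j)

lemma canonF_inert {l m k : ℕ} (g : Fin l → Option (Fin m)) (h : (supp g).card = k) :
    IsInertOrdered (canonF g h) := by
  constructor
  · intro j
    refine ⟨(supp g).orderEmbOfFin h j, ?_, ?_⟩
    · have hmem := (supp g).orderEmbOfFin_mem h j
      simp only [canonF, dif_pos hmem]
      congr 1
      have : (⟨(supp g).orderEmbOfFin h j, hmem⟩ : supp g) = (supp g).orderIsoOfFin h j :=
        Subtype.ext ((supp g).coe_orderIsoOfFin_apply h j).symm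
      rw [this, OrderIso.symm_apply_apply]
    · intro y hy
      by_cases hmy : y ∈ supp g
      · simp only [canonF, dif_pos hmy, Option.some_inj] at hy
        have : (⟨y, hmy⟩ : supp g) = (supp g).orderIsoOfFin h j := by
          rw [← hy, OrderIso.apply_symm_apply]
        have := congrArg Subtype.val this
        simpa [(supp g).coe_orderIsoOfFin_apply h j] using this
      · simp [canonF, dif_neg hmy] at hy
  · intro x y hxy i j hi hj
    by_cases hmx : x ∈ supp g
    · by_cases hmy : y ∈ supp g
      · simp only [canonF, dif_pos hmx, dif_pos hmy, Option.some_inj] at hi hj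
        rw [← hi, ← hj]
        exact ((supp g).orderIsoOfFin h).symm.monotone (Subtype.mk_le_mk.2 hxy)
      · simp [canonF, dif_neg hmy] at hj
    · simp [canonF, dif_neg hmx] at hi

lemma canonSig_ne_none {l m k : ℕ} (g : Fin l → Option (Fin m)) (h : (supp g).card = k)
    (j : Fin k) : canonSig g h j ≠ none := by
  have hmem := (supp g).orderEmbOfFin_mem h j
  exact (mem_supp_iff g _).1 hmem

lemma canon_fac {l m k : ℕ} (g : Fin l → Option (Fin m)) (h : (supp g).card = k)
    (x : Fin l) : (canonF g h x).bind (canonSig g h) = g x := by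
  by_cases hx : x ∈ supp g
  · simp only [canonF, dif_pos hx]
    show canonSig g h (((supp g).orderIsoOfFin h).symm ⟨x, hx⟩) = g x
    unfold canonSig
    have : ((supp g).orderEmbOfFin h) (((supp g).orderIsoOfFin h).symm ⟨x, hx⟩) = x := by
      rw [← (supp g).coe_orderIsoOfFin_apply h, OrderIso.apply_symm_apply]
    rw [this]
  · simp only [canonF, dif_neg hx, Option.bind_none]
    have := (mem_supp_iff g x).not.1 hx
    exact (not_ne_iff.mp this).symm

/-- The "inverse" of an inert map with full support: the unique preimage of `j`. -/
noncomputable def inertInv {l k : ℕ} {f : Fin l → Option (Fin k)}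
    (hf : ∀ j : Fin k, ∃! x : Fin l, f x = some j) (j : Fin k) : Fin l :=
  (hf j).choose

lemma inertInv_spec {l k : ℕ} {f : Fin l → Option (Fin k)}
    (hf : ∀ j : Fin k, ∃! x : Fin l, f x = some j) (j : Fin k) :
    f (inertInv hf j) = some j :=
  (hf j).choose_spec.1

lemma inertInv_strictMono {l k : ℕ} {f : Fin l → Option (Fin k)}
    (hf : IsInertOrdered f) : StrictMono (inertInv hf.1) := by
  have hmono : Monotone (inertInv hf.1) := by
    intro i j hij
    by_contra hcon
    push_neg at hcon
    have := hf.2 _ _ hcon.le j i (inertInv_spec hf.1 j) (inertInv_spec hf.1 i)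
    have hij' : i = j := le_antisymm hij this
    subst hij'
    exact lt_irrefl _ hcon
  have hinj : Function.Injective (inertInv hf.1) := by
    intro i j hij
    have h1 := inertInv_spec hf.1 i
    have h2 := inertInv_spec hf.1 j
    rw [hij, h2] at h1
    exact (Option.some_inj.1 h1).symm
  exact hmono.strictMono_of_injective hinj

lemma supp_comp_of_inert {l k m : ℕ} {f : Fin l → Option (Fin k)}
    (hf : IsInertOrdered f) {σ : Fin k → Option (Fin m)} (hσ : ∀ j, σ j ≠ none) :
    supp (fun x => (f x).bind σ) = supp f := by
  ext x
  simp only [mem_supp_iff]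
  cases hfx : f x with
  | none => simp
  | some j => simp [hσ j]

lemma supp_inert_eq_image {l k : ℕ} {f : Fin l → Option (Fin k)}
    (hf : IsInertOrdered f) :
    supp f = Finset.image (inertInv hf.1) Finset.univ := by
  ext x
  simp only [mem_supp_iff, Finset.mem_image, Finset.mem_univ, true_and]
  constructor
  · intro hx
    cases hfx : f x with
    | none => exact absurd hfx hx
    | some j => exact ⟨j, ((hf.1 j).choose_spec.2 x hfx).symm⟩
  · rintro ⟨j, rfl⟩
    rw [inertInv_spec hf.1 j]
    simp

lemma card_supp_inert {l k : ℕ} {f : Fin l → Option (Fin k)}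
    (hf : IsInertOrdered f) : (supp f).card = k := by
  rw [supp_inert_eq_image hf,
    Finset.card_image_of_injective _ (inertInv_strictMono hf).injective]
  simp

lemma suppCard_comp_eq {l k m : ℕ} {f : Fin l → Option (Fin k)}
    (hf : IsInertOrdered f) {σ : Fin k → Option (Fin m)} (hσ : ∀ j, σ j ≠ none) :
    suppCard (fun x => (f x).bind σ) = k := by
  rw [suppCard_eq_card_supp, supp_comp_of_inert hf hσ, card_supp_inert hf]

/-- Uniqueness of the inert/full-support factorization. -/
lemma canon_unique {l k m : ℕ} (g : Fin l → Option (Fin m)) (h : (supp g).card = k)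
    {f : Fin l → Option (Fin k)} (hf : IsInertOrdered f)
    {σ : Fin k → Option (Fin m)} (hσ : ∀ j, σ j ≠ none)
    (hfac : ∀ x, (f x).bind σ = g x) :
    f = canonF g h ∧ σ = canonSig g h := by
  have hgf : (fun x => (f x).bind σ) = g := funext hfac
  have hsupp : supp g = supp f := by rw [← hgf, supp_comp_of_inert hf hσ]
  have hFmem : ∀ j, inertInv hf.1 j ∈ supp g := by
    intro j
    rw [hsupp, mem_supp_iff, inertInv_spec hf.1 j]
    simp
  have hFeq : inertInv hf.1 = (supp g).orderEmbOfFin h :=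
    Finset.orderEmbOfFin_unique h hFmem (inertInv_strictMono hf)
  constructor
  · funext x
    by_cases hx : x ∈ supp g
    · have hx' := hx
      rw [hsupp, mem_supp_iff] at hx'
      cases hfx : f x with
      | none => exact absurd hfx hx'
      | some j =>
        have hxF : x = inertInv hf.1 j := (hf.1 j).choose_spec.2 x hfx
        simp only [canonF, dif_pos hx, Option.some_inj]
        have hsub : (⟨x, hx⟩ : supp g) = (supp g).orderIsoOfFin h j := by
          apply Subtype.ext
          rw [(supp g).coe_orderIsoOfFin_apply h j, ← hFeq, ← hxF]
        rw [hsub, OrderIso.symm_apply_apply]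
    · have hx' : f x = none := by
        rw [hsupp, mem_supp_iff] at hx
        simpa using hx
      simp [canonF, dif_neg hx, hx']
  · funext j
    have : ((supp g).orderEmbOfFin h) j = inertInv hf.1 j := by rw [hFeq]
    show σ j = g ((supp g).orderEmbOfFin h j)
    rw [this, ← hfac, inertInv_spec hf.1 j]
    rfl

lemma suppCard_bd {l k m : ℕ} (hk : 0 < k) {f : Fin l → Option (Fin k)}
    (hf : ∀ j : Fin k, ∃! x : Fin l, f x = some j)
    {σ : Fin k → Option (Fin m)} {j₀ : Fin k} (hj₀ : σ j₀ = none) :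
    suppCard (fun x => (f x).bind σ) ≤ k - 1 := by
  classical
  refine le_of_le_of_eq
    (suppCard_comp_le_of_inert hk f hf σ (Finset.univ.erase j₀)
      fun j hj => Finset.mem_erase.2 ⟨fun hcontr => hj (hcontr ▸ hj₀), Finset.mem_univ j⟩) ?_
  rw [Finset.card_erase_of_mem (Finset.mem_univ j₀)]
  simp

end Aux

/-- **The pushout square** (Proposition 6.4.1 of the paper): for `1 < k < ℓ`, the
square
```
∐_{f ∈ S} ∂⟨k⟩  ⟶  W_{k-1}
      ↓                ↓
∐_{f ∈ S} j⟨k⟩  ⟶  W_k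
```
is a pushout in the category of functors from `Γᵒᵖ` to sets. -/
theorem isPushout_filtration (l k : ℕ) (hk : 1 < k) (hkl : k < l) :
    IsPushout (topMap l k (Nat.zero_lt_of_lt hk)) (leftMap l k)
      (rightMap l k) (bottomMap l k (Nat.zero_lt_of_lt hk)) := by
  classical
  set hk0 : 0 < k := Nat.zero_lt_of_lt hk with hk0def
  have hcard : ∀ {m : GammaOp} (g : (W l k).obj m), ¬ suppCard g.1 ≤ k - 1 →
      (supp g.1).card = k := by
    intro m g hg
    have h1 : suppCard g.1 ≤ k := g.2
    rw [suppCard_eq_card_supp] at h1 hg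
    omega
  have comm : topMap l k hk0 ≫ rightMap l k = leftMap l k ≫ bottomMap l k hk0 := by
    ext m p
    rfl
  apply IsPushout.of_isColimit' ⟨comm⟩
  -- the descent map
  refine Limits.PushoutCocone.IsColimit.mk _ (fun s => ?_) (fun s => ?_) (fun s => ?_)
    (fun s mNT h1 h2 => ?_)
  · -- desc
    refine ⟨fun m => TypeCat.ofHom fun g =>
      if h : suppCard g.1 ≤ k - 1 then s.inl.app m ⟨g.1, h⟩
      else s.inr.app m (⟨canonF g.1 (hcard g h), canonF_inert _ _⟩,
        canonSig g.1 (hcard g h)), ?_⟩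
    intro m m' φ
    refine ConcreteCategory.hom_ext _ _ fun g => ?_
    dsimp only [types_comp_apply, TypeCat.ofHom_apply]
    by_cases hg : suppCard g.1 ≤ k - 1
    · -- small support: stays small
      have hgφ : suppCard ((W l k).map φ g).1 ≤ k - 1 :=
        le_trans (suppCard_comp_le g.1 φ) hg
      simp only [dif_pos hgφ, dif_pos hg]
      have : (⟨((W l k).map φ g).1, hgφ⟩ : (W l (k-1)).obj m') =
          (W l (k-1)).map φ ⟨g.1, hg⟩ := Subtype.ext rfl
      rw [this]
      exact FunctorToTypes.naturality s.inl φ _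
    · simp only [dif_neg hg]
      set h := hcard g hg
      set fS : SIdx l k := ⟨canonF g.1 h, canonF_inert _ _⟩ with hfSdef
      set σ := canonSig g.1 h with hσdef
      have hfacφ : ∀ x, (canonF g.1 h x).bind (fun j => (σ j).bind φ) =
          ((W l k).map φ g).1 x := by
        intro x
        show (canonF g.1 h x).bind (fun j => (σ j).bind φ) = (g.1 x).bind φ
        rw [← canon_fac g.1 h x]
        cases canonF g.1 h x <;> rfl
      by_cases hgφ : suppCard ((W l k).map φ g).1 ≤ k - 1
      · -- support drops: σ ≫ φ hits the basepoint
        simp only [dif_pos hgφ]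
        have hex : ∃ j, (σ j).bind φ = none := by
          by_contra hcon
          push_neg at hcon
          have := suppCard_comp_eq (canonF_inert g.1 h) hcon
          have heq : (fun x => (canonF g.1 h x).bind (fun j => (σ j).bind φ)) =
              ((W l k).map φ g).1 := funext hfacφ
          rw [heq] at this
          omega
        obtain ⟨j₀, hj₀⟩ := hex
        have hkey := ConcreteCategory.congr_hom (NatTrans.congr_app s.condition m')
          ((fS, ⟨fun j => (σ j).bind φ, ⟨j₀, hj₀⟩⟩) : (SBd l k).obj m')
        have htop : (topMap l k hk0).app m'
            ((fS, ⟨fun j => (σ j).bind φ, ⟨j₀, hj₀⟩⟩) : (SBd l k).obj m') =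
            ⟨((W l k).map φ g).1, hgφ⟩ := Subtype.ext (funext hfacφ)
        simp only [NatTrans.comp_app, types_comp_apply, ConcreteCategory.comp_apply] at hkey
        refine (congrArg (fun x => s.inl.app m' x) htop.symm).trans ?_
        refine hkey.trans ?_
        show s.inr.app m' ((SJ l k).map φ (fS, σ)) = _
        exact FunctorToTypes.naturality s.inr φ _
      · -- support stays full: use uniqueness of the factorization
        simp only [dif_neg hgφ]
        set h' := hcard ((W l k).map φ g) hgφ
        have hσφ : ∀ j, (σ j).bind φ ≠ none := by
          intro j hj
          have hsub : supp ((W l k).map φ g).1 ⊆ supp g.1 := by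
            intro x hx
            rw [mem_supp_iff] at hx ⊢
            intro hgx
            apply hx
            show (g.1 x).bind φ = none
            rw [hgx]; rfl
          have hseq : supp ((W l k).map φ g).1 = supp g.1 :=
            Finset.eq_of_subset_of_card_le hsub (by rw [h, h'])
          have hmem : ((supp g.1).orderEmbOfFin h) j ∈ supp ((W l k).map φ g).1 := by
            rw [hseq]; exact (supp g.1).orderEmbOfFin_mem h j
          rw [mem_supp_iff] at hmem
          apply hmem
          show (g.1 _).bind φ = none
          have := canonSig_ne_none g.1 h j
          rw [hσdef] at hj
          unfold canonSig at hj
          exact hj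
        obtain ⟨hF, hS⟩ := canon_unique ((W l k).map φ g).1 h'
          (canonF_inert g.1 h) hσφ hfacφ
        have : ((⟨canonF ((W l k).map φ g).1 h', canonF_inert _ _⟩ : SIdx l k),
            canonSig ((W l k).map φ g).1 h') =
            (SJ l k).map φ (fS, σ) := by
          apply Prod.ext
          · exact Subtype.ext hF.symm
          · exact hS.symm
        refine (congrArg (fun x => s.inr.app m' x) this).trans ?_
        exact FunctorToTypes.naturality s.inr φ _
  · -- fac_left
    ext m g
    have hg : suppCard (((rightMap l k).app m g).1) ≤ k - 1 := g.2
    show (if h : _ then s.inl.app m ⟨_, h⟩ else _) = s.inl.app m g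
    refine (dif_pos hg).trans ?_
    exact congrArg (s.inl.app m) (Subtype.ext rfl)
  · -- fac_right
    ext m p
    set g := (bottomMap l k hk0).app m p with hgdef
    by_cases hσ : ∀ j, p.2 j ≠ none
    · have hfull : suppCard g.1 = k := suppCard_comp_eq p.1.2 hσ
      have hng : ¬ suppCard g.1 ≤ k - 1 := by omega
      show (if h : _ then _ else s.inr.app m _) = s.inr.app m p
      refine (dif_neg hng).trans ?_
      obtain ⟨hF, hS⟩ := canon_unique g.1 (hcard g hng) p.1.2 hσ (fun _ => rfl)
      exact congrArg (s.inr.app m) (Prod.ext (Subtype.ext hF.symm) hS.symm)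
    · push_neg at hσ
      obtain ⟨j₀, hj₀⟩ := hσ
      have hg : suppCard g.1 ≤ k - 1 := suppCard_bd hk0 p.1.2.1 hj₀
      show (if h : _ then s.inl.app m ⟨_, h⟩ else _) = s.inr.app m p
      refine (dif_pos hg).trans ?_
      have hkey := ConcreteCategory.congr_hom (NatTrans.congr_app s.condition m)
        ((p.1, ⟨p.2, ⟨j₀, hj₀⟩⟩) : (SBd l k).obj m)
      simp only [NatTrans.comp_app, types_comp_apply, ConcreteCategory.comp_apply] at hkey
      have htop : (topMap l k hk0).app m ((p.1, ⟨p.2, ⟨j₀, hj₀⟩⟩) : (SBd l k).obj m) =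
          ⟨g.1, hg⟩ := Subtype.ext rfl
      exact hkey
  · -- uniqueness
    ext m g
    by_cases hg : suppCard g.1 ≤ k - 1
    · show mNT.app m g = if h : _ then s.inl.app m ⟨_, h⟩ else _
      refine Eq.trans ?_ (dif_pos hg).symm
      have hkey := ConcreteCategory.congr_hom (NatTrans.congr_app h1 m) (⟨g.1, hg⟩ : (W l (k-1)).obj m)
      simp only [NatTrans.comp_app, types_comp_apply, ConcreteCategory.comp_apply] at hkey
      have hge : (rightMap l k).app m ⟨g.1, hg⟩ = g := Subtype.ext rfl
      exact hkey
    · show mNT.app m g = if h : _ then _ else s.inr.app m _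
      refine Eq.trans ?_ (dif_neg hg).symm
      have hbot : g = (bottomMap l k hk0).app m
          (⟨canonF g.1 (hcard g hg), canonF_inert _ _⟩, canonSig g.1 (hcard g hg)) :=
        Subtype.ext (funext fun x => (canon_fac g.1 (hcard g hg) x).symm)
      have hkey := ConcreteCategory.congr_hom (NatTrans.congr_app h2 m)
        ((⟨canonF g.1 (hcard g hg), canonF_inert _ _⟩, canonSig g.1 (hcard g hg)) :
          (SJ l k).obj m)
      simp only [NatTrans.comp_app, types_comp_apply, ConcreteCategory.comp_apply] at hkey
      exact (congrArg (fun x => mNT.app m x) hbot).trans hkey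

end Stmt2
end
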